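/- The polynomial p(x,y) = x^3 + 3xy + y^3 satisfies p(x,y) = 1 whenever x + y = 1, has nonnegative coefficients, exactly 3 nonzero monomials, and degree 3 = 2·3 − 3; moreover it is, up to swapping variables, the unique polynomial of degree 3 with nonnegative coefficients, 3 nonzero terms, and p ≡ 1 on x + y = 1. -/

import Mathlib

open MvPolynomial

noncomputable def p18 : MvPolynomial (Fin 2) ℝ :=
  X 0 ^ 3 + 3 * X 0 * X 1 + X 1 ^ 3

noncomputable def dd (i j : ℕ) : Fin 2 →₀ ℕ := Finsupp.single 0 i + Finsupp.single 1 j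

lemma dd_apply0 (i j : ℕ) : dd i j 0 = i := by simp [dd]
lemma dd_apply1 (i j : ℕ) : dd i j 1 = j := by simp [dd]

lemma dd_eq_iff {i j k l : ℕ} : dd i j = dd k l ↔ i = k ∧ j = l := by
  constructor
  · intro h
    constructor
    · have := congrArg (fun f => f 0) h; simpa [dd_apply0] using this
    · have := congrArg (fun f => f 1) h; simpa [dd_apply1] using this
  · rintro ⟨rfl, rfl⟩; rfl

lemma dd_repr (m : Fin 2 →₀ ℕ) : m = dd (m 0) (m 1) := by
  ext a; fin_cases a <;> simp [dd]

lemma dd_sum (i j : ℕ) : ((dd i j).sum fun _ e => e) = i + j := by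
  rw [Finsupp.sum_fintype]
  · simp [Fin.sum_univ_two, dd_apply0, dd_apply1]
  · intro _; rfl

lemma mono_eq (i j : ℕ) (a : ℝ) :
    C a * X 0 ^ i * X 1 ^ j = (monomial (dd i j) a : MvPolynomial (Fin 2) ℝ) := by
  rw [C_apply, X_pow_eq_monomial, X_pow_eq_monomial, monomial_mul, monomial_mul]
  simp [dd]

lemma coeff_zero_of_deg (q : MvPolynomial (Fin 2) ℝ) (h : q.totalDegree ≤ 3)
    (m : Fin 2 →₀ ℕ) (hm : 3 < m 0 + m 1) : q.coeff m = 0 := by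
  by_contra hc
  have hmem : m ∈ q.support := mem_support_iff.2 hc
  have := le_totalDegree hmem
  rw [dd_repr m, dd_sum] at this
  omega

lemma decomp (q : MvPolynomial (Fin 2) ℝ) (h : q.totalDegree ≤ 3) :
    q = C (q.coeff (dd 0 0)) + C (q.coeff (dd 1 0)) * X 0 + C (q.coeff (dd 0 1)) * X 1
      + C (q.coeff (dd 2 0)) * X 0 ^ 2 + C (q.coeff (dd 1 1)) * X 0 * X 1
      + C (q.coeff (dd 0 2)) * X 1 ^ 2
      + C (q.coeff (dd 3 0)) * X 0 ^ 3 + C (q.coeff (dd 2 1)) * X 0 ^ 2 * X 1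
      + C (q.coeff (dd 1 2)) * X 0 * X 1 ^ 2 + C (q.coeff (dd 0 3)) * X 1 ^ 3 := by
  apply MvPolynomial.ext
  intro m
  rw [dd_repr m]
  classical
  simp only [mul_assoc]
  rw [show (C (q.coeff (dd 0 0)) : MvPolynomial (Fin 2) ℝ) = C (q.coeff (dd 0 0)) * X 0 ^ 0 * X 1 ^ 0 by ring]
  rw [show (C (q.coeff (dd 1 0)) * X 0 : MvPolynomial (Fin 2) ℝ) = C (q.coeff (dd 1 0)) * X 0 ^ 1 * X 1 ^ 0 by ring]
  rw [show (C (q.coeff (dd 0 1)) * X 1 : MvPolynomial (Fin 2) ℝ) = C (q.coeff (dd 0 1)) * X 0 ^ 0 * X 1 ^ 1 by ring]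
  rw [show (C (q.coeff (dd 2 0)) * X 0 ^ 2 : MvPolynomial (Fin 2) ℝ) = C (q.coeff (dd 2 0)) * X 0 ^ 2 * X 1 ^ 0 by ring]
  rw [show (C (q.coeff (dd 1 1)) * (X 0 * X 1) : MvPolynomial (Fin 2) ℝ) = C (q.coeff (dd 1 1)) * X 0 ^ 1 * X 1 ^ 1 by ring]
  rw [show (C (q.coeff (dd 0 2)) * X 1 ^ 2 : MvPolynomial (Fin 2) ℝ) = C (q.coeff (dd 0 2)) * X 0 ^ 0 * X 1 ^ 2 by ring]
  rw [show (C (q.coeff (dd 3 0)) * X 0 ^ 3 : MvPolynomial (Fin 2) ℝ) = C (q.coeff (dd 3 0)) * X 0 ^ 3 * X 1 ^ 0 by ring]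
  rw [show (C (q.coeff (dd 2 1)) * (X 0 ^ 2 * X 1) : MvPolynomial (Fin 2) ℝ) = C (q.coeff (dd 2 1)) * X 0 ^ 2 * X 1 ^ 1 by ring]
  rw [show (C (q.coeff (dd 1 2)) * (X 0 * X 1 ^ 2) : MvPolynomial (Fin 2) ℝ) = C (q.coeff (dd 1 2)) * X 0 ^ 1 * X 1 ^ 2 by ring]
  rw [show (C (q.coeff (dd 0 3)) * X 1 ^ 3 : MvPolynomial (Fin 2) ℝ) = C (q.coeff (dd 0 3)) * X 0 ^ 0 * X 1 ^ 3 by ring]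
  simp only [mono_eq, coeff_add, coeff_monomial, dd_eq_iff]
  have hz := coeff_zero_of_deg q h
  generalize m 0 = a at *
  generalize m 1 = b at *
  by_cases hab : a + b ≤ 3
  · have ha3 : a ≤ 3 := by omega
    interval_cases a <;> (have hb3 : b ≤ 3 := by omega) <;> interval_cases b <;> simp <;> omega
  · have h1 : ¬(0 = a ∧ 0 = b) := by omega
    have h2 : ¬(1 = a ∧ 0 = b) := by omega
    have h3 : ¬(0 = a ∧ 1 = b) := by omega
    have h4 : ¬(2 = a ∧ 0 = b) := by omega
    have h5 : ¬(1 = a ∧ 1 = b) := by omega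
    have h6 : ¬(0 = a ∧ 2 = b) := by omega
    have h7 : ¬(3 = a ∧ 0 = b) := by omega
    have h8 : ¬(2 = a ∧ 1 = b) := by omega
    have h9 : ¬(1 = a ∧ 2 = b) := by omega
    have h10 : ¬(0 = a ∧ 3 = b) := by omega
    rw [hz (dd a b) (by rw [dd_apply0, dd_apply1]; omega)]
    simp [h1, h2, h3, h4, h5, h6, h7, h8, h9, h10]

noncomputable def p18' : MvPolynomial (Fin 2) ℝ :=
  X 0 ^ 3 + 3 * X 0 * X 1 + X 1 ^ 3

lemma p18_eq : p18' = monomial (dd 3 0) 1 + monomial (dd 1 1) 3 + monomial (dd 0 3) 1 := by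
  rw [p18', ← mono_eq, ← mono_eq, ← mono_eq]
  simp only [map_one, map_ofNat]
  ring

lemma coeff_p18 (m : Fin 2 →₀ ℕ) :
    p18'.coeff m = (if dd 3 0 = m then (1:ℝ) else 0) + (if dd 1 1 = m then 3 else 0)
      + (if dd 0 3 = m then 1 else 0) := by
  classical
  rw [p18_eq]
  simp [coeff_monomial]

lemma support_p18 : p18'.support = {dd 3 0, dd 1 1, dd 0 3} := by
  classical
  ext m
  rw [mem_support_iff, coeff_p18]
  constructor
  · intro hm
    by_contra hc
    simp only [Finset.mem_insert, Finset.mem_singleton] at hc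
    push_neg at hc
    rw [if_neg (fun h => hc.1 h.symm), if_neg (fun h => hc.2.1 h.symm),
      if_neg (fun h => hc.2.2 h.symm)] at hm
    norm_num at hm
  · intro hm
    simp only [Finset.mem_insert, Finset.mem_singleton] at hm
    rcases hm with rfl | rfl | rfl <;>
      · rw [if_pos rfl]
        rw [if_neg, if_neg] <;> first | positivity | (simp [dd_eq_iff])

lemma card_p18 : p18'.support.card = 3 := by
  rw [support_p18]
  rw [Finset.card_insert_of_notMem (by simp [dd_eq_iff]),
    Finset.card_insert_of_notMem (by simp [dd_eq_iff]), Finset.card_singleton]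

lemma totalDegree_p18 : p18'.totalDegree = 3 := by
  rw [totalDegree, support_p18]
  simp [Finset.sup_insert, dd_sum]

lemma coeff_nonneg_p18 : ∀ m, 0 ≤ p18'.coeff m := by
  intro m
  rw [coeff_p18]
  split_ifs <;> norm_num

lemma eval_p18 : ∀ x y : ℝ, x + y = 1 → eval ![x, y] p18' = 1 := by
  intro x y hxy
  have hy : y = 1 - x := by linarith
  subst hy
  simp [p18']
  ring

lemma three_support (q : MvPolynomial (Fin 2) ℝ) (hcard : q.support.card = 3)
    {m1 m2 m3 : Fin 2 →₀ ℕ} (h12 : m1 ≠ m2) (h13 : m1 ≠ m3) (h23 : m2 ≠ m3)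
    (h1 : q.coeff m1 ≠ 0) (h2 : q.coeff m2 ≠ 0) (h3 : q.coeff m3 ≠ 0) :
    ∀ m, m ≠ m1 → m ≠ m2 → m ≠ m3 → q.coeff m = 0 := by
  classical
  intro m hm1 hm2 hm3
  by_contra hco
  have hsub : ({m, m1, m2, m3} : Finset (Fin 2 →₀ ℕ)) ⊆ q.support := by
    intro x hx
    simp only [Finset.mem_insert, Finset.mem_singleton] at hx
    rcases hx with rfl | rfl | rfl | rfl <;> exact mem_support_iff.2 (by assumption)
  have hc4 : ({m, m1, m2, m3} : Finset (Fin 2 →₀ ℕ)).card = 4 := by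
    rw [Finset.card_insert_of_notMem (by simp [hm1, hm2, hm3]),
      Finset.card_insert_of_notMem (by simp [h12, h13]),
      Finset.card_insert_of_notMem (by simp [h23]), Finset.card_singleton]
  have := Finset.card_le_card hsub
  omega

lemma uniq (q : MvPolynomial (Fin 2) ℝ) (hn : ∀ m, 0 ≤ q.coeff m)
    (hcard : q.support.card = 3) (hdeg : q.totalDegree = 3)
    (he : ∀ x y : ℝ, x + y = 1 → eval ![x, y] q = 1) : q = p18' := by
  have hdec := decomp q (le_of_eq hdeg)
  have key : ∀ x : ℝ, q.coeff (dd 0 0) + q.coeff (dd 1 0) * x + q.coeff (dd 0 1) * (1-x)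
      + q.coeff (dd 2 0) * x^2 + q.coeff (dd 1 1) * (x*(1-x)) + q.coeff (dd 0 2) * (1-x)^2
      + q.coeff (dd 3 0) * x^3 + q.coeff (dd 2 1) * (x^2*(1-x)) + q.coeff (dd 1 2) * (x*(1-x)^2)
      + q.coeff (dd 0 3) * (1-x)^3 = 1 := by
    intro x
    have h1 := he x (1-x) (by ring)
    rw [hdec] at h1
    simp only [eval_add, eval_mul, eval_pow, eval_C, eval_X, Matrix.cons_val_zero,
      Matrix.cons_val_one, Matrix.head_cons] at h1
    linear_combination h1
  have n00 := hn (dd 0 0)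
  have n10 := hn (dd 1 0)
  have n01 := hn (dd 0 1)
  have n20 := hn (dd 2 0)
  have n11 := hn (dd 1 1)
  have n02 := hn (dd 0 2)
  have n30 := hn (dd 3 0)
  have n21 := hn (dd 2 1)
  have n12 := hn (dd 1 2)
  have n03 := hn (dd 0 3)
  have HE0 : q.coeff (dd 0 0) + q.coeff (dd 0 1) + q.coeff (dd 0 2) + q.coeff (dd 0 3) = 1 := by
    linarith [key 0, key 1, key 2, key (-1)]
  have HE1 : q.coeff (dd 1 0) + q.coeff (dd 1 1) + q.coeff (dd 1 2)
      = q.coeff (dd 0 1) + 2 * q.coeff (dd 0 2) + 3 * q.coeff (dd 0 3) := by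
    linarith [key 0, key 1, key 2, key (-1)]
  have HE2 : q.coeff (dd 2 0) + q.coeff (dd 2 1) + q.coeff (dd 0 2) + 3 * q.coeff (dd 0 3)
      = q.coeff (dd 1 1) + 2 * q.coeff (dd 1 2) := by
    linarith [key 0, key 1, key 2, key (-1)]
  have HE3 : q.coeff (dd 3 0) + q.coeff (dd 1 2) = q.coeff (dd 2 1) + q.coeff (dd 0 3) := by
    linarith [key 0, key 1, key 2, key (-1)]
  have hdegpos : 0 < q.coeff (dd 3 0) + q.coeff (dd 2 1) + q.coeff (dd 1 2) + q.coeff (dd 0 3) := by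
    have hne : q.support.Nonempty := Finset.card_pos.1 (by rw [hcard]; norm_num)
    obtain ⟨m, hm, hsup⟩ := Finset.exists_mem_eq_sup q.support hne (fun s => s.sum fun _ e => e)
    have hco := mem_support_iff.1 hm
    have hm3 : m 0 + m 1 = 3 := by
      have h3 : (m.sum fun _ e => e) = 3 := by rw [← hsup]; exact hdeg
      rw [dd_repr m, dd_sum] at h3
      exact h3
    have hre := dd_repr m
    rcases (by omega : (m 0 = 3 ∧ m 1 = 0) ∨ (m 0 = 2 ∧ m 1 = 1) ∨ (m 0 = 1 ∧ m 1 = 2)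
        ∨ (m 0 = 0 ∧ m 1 = 3)) with ⟨h1,h2⟩|⟨h1,h2⟩|⟨h1,h2⟩|⟨h1,h2⟩ <;>
      rw [h1, h2] at hre <;> rw [hre] at hco <;>
      linarith [(hn _).lt_of_ne' hco]
  rcases n30.lt_or_eq with h30 | h30
  · rcases n21.lt_or_eq with h21 | h21
    · rcases n12.lt_or_eq with h12 | h12
      · rcases n03.lt_or_eq with h03 | h03
        · -- all four positive
          exfalso
          have Z := three_support q hcard (by simp [dd_eq_iff]) (by simp [dd_eq_iff]) (by simp [dd_eq_iff]) h30.ne' h21.ne' h12.ne'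
          have z03 : q.coeff (dd 0 3) = 0 := Z (dd 0 3) (by simp [dd_eq_iff]) (by simp [dd_eq_iff]) (by simp [dd_eq_iff])
          linarith
        · -- {30,21,12}
          exfalso
          have Z := three_support q hcard (by simp [dd_eq_iff]) (by simp [dd_eq_iff]) (by simp [dd_eq_iff]) h30.ne' h21.ne' h12.ne'
          have z00 : q.coeff (dd 0 0) = 0 := Z (dd 0 0) (by simp [dd_eq_iff]) (by simp [dd_eq_iff]) (by simp [dd_eq_iff])
          have z01 : q.coeff (dd 0 1) = 0 := Z (dd 0 1) (by simp [dd_eq_iff]) (by simp [dd_eq_iff]) (by simp [dd_eq_iff])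
          have z02 : q.coeff (dd 0 2) = 0 := Z (dd 0 2) (by simp [dd_eq_iff]) (by simp [dd_eq_iff]) (by simp [dd_eq_iff])
          linarith
      · rcases n03.lt_or_eq with h03 | h03
        · -- {30,21,03}
          exfalso
          have Z := three_support q hcard (by simp [dd_eq_iff]) (by simp [dd_eq_iff]) (by simp [dd_eq_iff]) h30.ne' h21.ne' h03.ne'
          have z10 : q.coeff (dd 1 0) = 0 := Z (dd 1 0) (by simp [dd_eq_iff]) (by simp [dd_eq_iff]) (by simp [dd_eq_iff])
          have z11 : q.coeff (dd 1 1) = 0 := Z (dd 1 1) (by simp [dd_eq_iff]) (by simp [dd_eq_iff]) (by simp [dd_eq_iff])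
          have z01 : q.coeff (dd 0 1) = 0 := Z (dd 0 1) (by simp [dd_eq_iff]) (by simp [dd_eq_iff]) (by simp [dd_eq_iff])
          have z02 : q.coeff (dd 0 2) = 0 := Z (dd 0 2) (by simp [dd_eq_iff]) (by simp [dd_eq_iff]) (by simp [dd_eq_iff])
          linarith
        · -- {30,21} + low
          exfalso
          rcases n00.lt_or_eq with h00 | h00
          · have Z := three_support q hcard (by simp [dd_eq_iff]) (by simp [dd_eq_iff]) (by simp [dd_eq_iff]) h30.ne' h21.ne' h00.ne'
            have z20 : q.coeff (dd 2 0) = 0 := Z (dd 2 0) (by simp [dd_eq_iff]) (by simp [dd_eq_iff]) (by simp [dd_eq_iff])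
            have z02 : q.coeff (dd 0 2) = 0 := Z (dd 0 2) (by simp [dd_eq_iff]) (by simp [dd_eq_iff]) (by simp [dd_eq_iff])
            have z11 : q.coeff (dd 1 1) = 0 := Z (dd 1 1) (by simp [dd_eq_iff]) (by simp [dd_eq_iff]) (by simp [dd_eq_iff])
            linarith
          rcases n01.lt_or_eq with h01 | h01
          · have Z := three_support q hcard (by simp [dd_eq_iff]) (by simp [dd_eq_iff]) (by simp [dd_eq_iff]) h30.ne' h21.ne' h01.ne'
            have z10 : q.coeff (dd 1 0) = 0 := Z (dd 1 0) (by simp [dd_eq_iff]) (by simp [dd_eq_iff]) (by simp [dd_eq_iff])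
            have z11 : q.coeff (dd 1 1) = 0 := Z (dd 1 1) (by simp [dd_eq_iff]) (by simp [dd_eq_iff]) (by simp [dd_eq_iff])
            have z02 : q.coeff (dd 0 2) = 0 := Z (dd 0 2) (by simp [dd_eq_iff]) (by simp [dd_eq_iff]) (by simp [dd_eq_iff])
            linarith
          rcases n02.lt_or_eq with h02 | h02
          · have Z := three_support q hcard (by simp [dd_eq_iff]) (by simp [dd_eq_iff]) (by simp [dd_eq_iff]) h30.ne' h21.ne' h02.ne'
            have z10 : q.coeff (dd 1 0) = 0 := Z (dd 1 0) (by simp [dd_eq_iff]) (by simp [dd_eq_iff]) (by simp [dd_eq_iff])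
            have z11 : q.coeff (dd 1 1) = 0 := Z (dd 1 1) (by simp [dd_eq_iff]) (by simp [dd_eq_iff]) (by simp [dd_eq_iff])
            have z01 : q.coeff (dd 0 1) = 0 := Z (dd 0 1) (by simp [dd_eq_iff]) (by simp [dd_eq_iff]) (by simp [dd_eq_iff])
            linarith
          · linarith
    · rcases n12.lt_or_eq with h12 | h12
      · rcases n03.lt_or_eq with h03 | h03
        · -- {30,12,03}
          exfalso
          have Z := three_support q hcard (by simp [dd_eq_iff]) (by simp [dd_eq_iff]) (by simp [dd_eq_iff]) h30.ne' h12.ne' h03.ne'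
          have z10 : q.coeff (dd 1 0) = 0 := Z (dd 1 0) (by simp [dd_eq_iff]) (by simp [dd_eq_iff]) (by simp [dd_eq_iff])
          have z11 : q.coeff (dd 1 1) = 0 := Z (dd 1 1) (by simp [dd_eq_iff]) (by simp [dd_eq_iff]) (by simp [dd_eq_iff])
          have z01 : q.coeff (dd 0 1) = 0 := Z (dd 0 1) (by simp [dd_eq_iff]) (by simp [dd_eq_iff]) (by simp [dd_eq_iff])
          have z02 : q.coeff (dd 0 2) = 0 := Z (dd 0 2) (by simp [dd_eq_iff]) (by simp [dd_eq_iff]) (by simp [dd_eq_iff])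
          have z20 : q.coeff (dd 2 0) = 0 := Z (dd 2 0) (by simp [dd_eq_iff]) (by simp [dd_eq_iff]) (by simp [dd_eq_iff])
          linarith
        · exfalso; linarith
      · rcases n03.lt_or_eq with h03 | h03
        · -- {30,03}: main case
          rcases n10.lt_or_eq with h10 | h10
          · exfalso
            have Z := three_support q hcard (by simp [dd_eq_iff]) (by simp [dd_eq_iff]) (by simp [dd_eq_iff]) h30.ne' h03.ne' h10.ne'
            have z20 : q.coeff (dd 2 0) = 0 := Z (dd 2 0) (by simp [dd_eq_iff]) (by simp [dd_eq_iff]) (by simp [dd_eq_iff])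
            have z02 : q.coeff (dd 0 2) = 0 := Z (dd 0 2) (by simp [dd_eq_iff]) (by simp [dd_eq_iff]) (by simp [dd_eq_iff])
            have z11 : q.coeff (dd 1 1) = 0 := Z (dd 1 1) (by simp [dd_eq_iff]) (by simp [dd_eq_iff]) (by simp [dd_eq_iff])
            linarith
          rcases n11.lt_or_eq with h11 | h11
          · -- success
            have Z := three_support q hcard (by simp [dd_eq_iff]) (by simp [dd_eq_iff]) (by simp [dd_eq_iff]) h30.ne' h03.ne' h11.ne'
            have z00 : q.coeff (dd 0 0) = 0 := Z (dd 0 0) (by simp [dd_eq_iff]) (by simp [dd_eq_iff]) (by simp [dd_eq_iff])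
            have z01 : q.coeff (dd 0 1) = 0 := Z (dd 0 1) (by simp [dd_eq_iff]) (by simp [dd_eq_iff]) (by simp [dd_eq_iff])
            have z02 : q.coeff (dd 0 2) = 0 := Z (dd 0 2) (by simp [dd_eq_iff]) (by simp [dd_eq_iff]) (by simp [dd_eq_iff])
            have z20 : q.coeff (dd 2 0) = 0 := Z (dd 2 0) (by simp [dd_eq_iff]) (by simp [dd_eq_iff]) (by simp [dd_eq_iff])
            have e03 : q.coeff (dd 0 3) = 1 := by linarith
            have e30 : q.coeff (dd 3 0) = 1 := by linarith
            have e11 : q.coeff (dd 1 1) = 3 := by linarith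
            have e10 : q.coeff (dd 1 0) = 0 := h10.symm
            have e21 : q.coeff (dd 2 1) = 0 := h21.symm
            have e12 : q.coeff (dd 1 2) = 0 := h12.symm
            rw [hdec, z00, z01, z02, z20, e03, e30, e11, e10, e21, e12]
            rw [p18']
            have hC3 : (C (3:ℝ) : MvPolynomial (Fin 2) ℝ) = 3 := by
              simp [map_ofNat]
            simp only [map_zero, map_one, zero_mul, zero_add, add_zero, one_mul, hC3]
            ring
          · exfalso; linarith
        · exfalso; linarith
  · rcases n21.lt_or_eq with h21 | h21
    · rcases n12.lt_or_eq with h12 | h12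
      · rcases n03.lt_or_eq with h03 | h03
        · -- {21,12,03}
          exfalso
          have Z := three_support q hcard (by simp [dd_eq_iff]) (by simp [dd_eq_iff]) (by simp [dd_eq_iff]) h21.ne' h12.ne' h03.ne'
          have z10 : q.coeff (dd 1 0) = 0 := Z (dd 1 0) (by simp [dd_eq_iff]) (by simp [dd_eq_iff]) (by simp [dd_eq_iff])
          have z11 : q.coeff (dd 1 1) = 0 := Z (dd 1 1) (by simp [dd_eq_iff]) (by simp [dd_eq_iff]) (by simp [dd_eq_iff])
          have z01 : q.coeff (dd 0 1) = 0 := Z (dd 0 1) (by simp [dd_eq_iff]) (by simp [dd_eq_iff]) (by simp [dd_eq_iff])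
          have z02 : q.coeff (dd 0 2) = 0 := Z (dd 0 2) (by simp [dd_eq_iff]) (by simp [dd_eq_iff]) (by simp [dd_eq_iff])
          have z20 : q.coeff (dd 2 0) = 0 := Z (dd 2 0) (by simp [dd_eq_iff]) (by simp [dd_eq_iff]) (by simp [dd_eq_iff])
          linarith
        · -- {21,12} + low
          exfalso
          rcases n00.lt_or_eq with h00 | h00
          · have Z := three_support q hcard (by simp [dd_eq_iff]) (by simp [dd_eq_iff]) (by simp [dd_eq_iff]) h21.ne' h12.ne' h00.ne'
            have z10 : q.coeff (dd 1 0) = 0 := Z (dd 1 0) (by simp [dd_eq_iff]) (by simp [dd_eq_iff]) (by simp [dd_eq_iff])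
            have z11 : q.coeff (dd 1 1) = 0 := Z (dd 1 1) (by simp [dd_eq_iff]) (by simp [dd_eq_iff]) (by simp [dd_eq_iff])
            have z01 : q.coeff (dd 0 1) = 0 := Z (dd 0 1) (by simp [dd_eq_iff]) (by simp [dd_eq_iff]) (by simp [dd_eq_iff])
            have z02 : q.coeff (dd 0 2) = 0 := Z (dd 0 2) (by simp [dd_eq_iff]) (by simp [dd_eq_iff]) (by simp [dd_eq_iff])
            linarith
          rcases n01.lt_or_eq with h01 | h01
          · have Z := three_support q hcard (by simp [dd_eq_iff]) (by simp [dd_eq_iff]) (by simp [dd_eq_iff]) h21.ne' h12.ne' h01.ne'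
            have z10 : q.coeff (dd 1 0) = 0 := Z (dd 1 0) (by simp [dd_eq_iff]) (by simp [dd_eq_iff]) (by simp [dd_eq_iff])
            have z11 : q.coeff (dd 1 1) = 0 := Z (dd 1 1) (by simp [dd_eq_iff]) (by simp [dd_eq_iff]) (by simp [dd_eq_iff])
            have z02 : q.coeff (dd 0 2) = 0 := Z (dd 0 2) (by simp [dd_eq_iff]) (by simp [dd_eq_iff]) (by simp [dd_eq_iff])
            have z20 : q.coeff (dd 2 0) = 0 := Z (dd 2 0) (by simp [dd_eq_iff]) (by simp [dd_eq_iff]) (by simp [dd_eq_iff])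
            linarith
          rcases n02.lt_or_eq with h02 | h02
          · have Z := three_support q hcard (by simp [dd_eq_iff]) (by simp [dd_eq_iff]) (by simp [dd_eq_iff]) h21.ne' h12.ne' h02.ne'
            have z10 : q.coeff (dd 1 0) = 0 := Z (dd 1 0) (by simp [dd_eq_iff]) (by simp [dd_eq_iff]) (by simp [dd_eq_iff])
            have z11 : q.coeff (dd 1 1) = 0 := Z (dd 1 1) (by simp [dd_eq_iff]) (by simp [dd_eq_iff]) (by simp [dd_eq_iff])
            have z01 : q.coeff (dd 0 1) = 0 := Z (dd 0 1) (by simp [dd_eq_iff]) (by simp [dd_eq_iff]) (by simp [dd_eq_iff])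
            have z20 : q.coeff (dd 2 0) = 0 := Z (dd 2 0) (by simp [dd_eq_iff]) (by simp [dd_eq_iff]) (by simp [dd_eq_iff])
            linarith
          · linarith
      · exfalso; linarith
    · rcases n12.lt_or_eq with h12 | h12
      · rcases n03.lt_or_eq with h03 | h03
        · -- {12,03}
          exfalso
          have h11 : 0 < q.coeff (dd 1 1) := by linarith
          have Z := three_support q hcard (by simp [dd_eq_iff]) (by simp [dd_eq_iff]) (by simp [dd_eq_iff]) h12.ne' h03.ne' h11.ne'
          have z10 : q.coeff (dd 1 0) = 0 := Z (dd 1 0) (by simp [dd_eq_iff]) (by simp [dd_eq_iff]) (by simp [dd_eq_iff])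
          have z01 : q.coeff (dd 0 1) = 0 := Z (dd 0 1) (by simp [dd_eq_iff]) (by simp [dd_eq_iff]) (by simp [dd_eq_iff])
          have z02 : q.coeff (dd 0 2) = 0 := Z (dd 0 2) (by simp [dd_eq_iff]) (by simp [dd_eq_iff]) (by simp [dd_eq_iff])
          have z20 : q.coeff (dd 2 0) = 0 := Z (dd 2 0) (by simp [dd_eq_iff]) (by simp [dd_eq_iff]) (by simp [dd_eq_iff])
          linarith
        · exfalso; linarith
      · exfalso; linarith

theorem stmt_18 :
    (∀ x y : ℝ, x + y = 1 → eval ![x, y] p18 = 1) ∧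
    (∀ m, 0 ≤ p18.coeff m) ∧
    p18.support.card = 3 ∧ p18.totalDegree = 3 ∧ (3 : ℕ) = 2 * 3 - 3 ∧
    (∀ q : MvPolynomial (Fin 2) ℝ,
      (∀ m, 0 ≤ q.coeff m) → q.support.card = 3 → q.totalDegree = 3 →
      (∀ x y : ℝ, x + y = 1 → eval ![x, y] q = 1) → q = p18) := by
  have hpp : p18 = p18' := rfl
  refine ⟨?_, ?_, ?_, ?_, by norm_num, ?_⟩
  · rw [hpp]; exact eval_p18
  · rw [hpp]; exact coeff_nonneg_p18
  · rw [hpp]; exact card_p18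
  · rw [hpp]; exact totalDegree_p18
  · intro q h1 h2 h3 h4
    rw [hpp]
    exact uniq q h1 h2 h3 h4
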